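/- Let F be a field, q ∈ F and f, g ∈ F[h] with deg f > 1. Suppose q is a primitive ℓ-th root of unity and there exists a ∈ F[h] with g(h) = σ(a) − q a, where σ is the F-algebra endomorphism of F[h] with σ(h) = f(h). Set Z = q(xy − a). Then the center of H_q(f,g) equals the subalgebra F[Z^ℓ] generated by Z^ℓ. -/

import Mathlib

open Polynomial

/-- The three generators `x`, `y`, `h` of a quantum generalized Heisenberg algebra. -/
inductive QGHAGen : Type
  | x : QGHAGen
  | y : QGHAGen
  | h : QGHAGen

/-- The defining relations of the quantum generalized Heisenberg algebra `H_q(f,g)`: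
`h*x = x*f(h)`, `y*h = f(h)*y`, and `y*x - q*(x*y) = g(h)`. -/
inductive QGHARel (F : Type*) [Field F] (q : F) (f g : F[X]) :
    FreeAlgebra F QGHAGen → FreeAlgebra F QGHAGen → Prop
  | hx : QGHARel F q f g
      (FreeAlgebra.ι F QGHAGen.h * FreeAlgebra.ι F QGHAGen.x)
      (FreeAlgebra.ι F QGHAGen.x * aeval (FreeAlgebra.ι F QGHAGen.h) f)
  | yh : QGHARel F q f g
      (FreeAlgebra.ι F QGHAGen.y * FreeAlgebra.ι F QGHAGen.h)
      (aeval (FreeAlgebra.ι F QGHAGen.h) f * FreeAlgebra.ι F QGHAGen.y)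
  | yx : QGHARel F q f g
      (FreeAlgebra.ι F QGHAGen.y * FreeAlgebra.ι F QGHAGen.x)
      (q • (FreeAlgebra.ι F QGHAGen.x * FreeAlgebra.ι F QGHAGen.y)
        + aeval (FreeAlgebra.ι F QGHAGen.h) g)

/-- The quantum generalized Heisenberg algebra `H_q(f,g)`. -/
def QGHA (F : Type*) [Field F] (q : F) (f g : F[X]) : Type _ :=
  RingQuot (QGHARel F q f g)

namespace QGHA

variable {F : Type*} [Field F] (q : F) (f g : F[X])

instance : Ring (QGHA F q f g) :=
  inferInstanceAs (Ring (RingQuot (QGHARel F q f g)))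

instance : Algebra F (QGHA F q f g) :=
  inferInstanceAs (Algebra F (RingQuot (QGHARel F q f g)))

/-- The generator `x` of `H_q(f,g)`. -/
def x : QGHA F q f g :=
  RingQuot.mkAlgHom F (QGHARel F q f g) (FreeAlgebra.ι F QGHAGen.x)

/-- The generator `y` of `H_q(f,g)`. -/
def y : QGHA F q f g :=
  RingQuot.mkAlgHom F (QGHARel F q f g) (FreeAlgebra.ι F QGHAGen.y)

/-- The generator `h` of `H_q(f,g)`. -/
def h : QGHA F q f g :=
  RingQuot.mkAlgHom F (QGHARel F q f g) (FreeAlgebra.ι F QGHAGen.h)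

end QGHA


namespace QGHAProof

variable {F : Type*} [Field F] (q : F) (f g : F[X])

/-- Iterates of `f` under composition: `Fm f m = f^{∘m}` (as image of `h`). -/
noncomputable def Fm (f : F[X]) : ℕ → F[X]
  | 0 => X
  | m + 1 => (Fm f m).comp f

@[simp] lemma Fm_zero : Fm f 0 = X := rfl
lemma Fm_succ (m : ℕ) : Fm f (m + 1) = (Fm f m).comp f := rfl

lemma Fm_succ' (m : ℕ) : Fm f (m + 1) = f.comp (Fm f m) := by
  induction m with
  | zero => simp [Fm]
  | succ m ih =>
    conv_lhs => rw [Fm_succ, ih]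
    rw [comp_assoc, ← Fm_succ]

/-- `Gm q f g m` is the polynomial appearing in `y x^m = q^m x^m y + x^{m-1} Gm m (h)`. -/
noncomputable def Gm : ℕ → F[X]
  | 0 => 0
  | m + 1 => q • Gm m + g.comp (Fm f m)

@[simp] lemma Gm_zero : Gm q f g 0 = 0 := rfl
lemma Gm_succ (m : ℕ) : Gm q f g (m + 1) = q • Gm q f g m + g.comp (Fm f m) := rfl

lemma Gm_alt (n : ℕ) : Gm q f g (n + 1) = q ^ n • g + (Gm q f g n).comp f := by
  induction n with
  | zero => simp [Gm]
  | succ n ih =>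
    conv_lhs => rw [Gm_succ q f g (n + 1), ih]
    conv_rhs => rw [Gm_succ q f g n]
    rw [add_comp, smul_comp, Fm_succ, ← comp_assoc, smul_add, smul_smul, ← pow_succ']
    module

/-- The representation space: finitely supported families over `ℕ × ℕ` of polynomials. -/
abbrev MM (F : Type*) [Field F] : Type _ := (ℕ × ℕ) →₀ F[X]

noncomputable def Xop : MM F →ₗ[F] MM F :=
  Finsupp.lsum F fun mn => Finsupp.lsingle (mn.1 + 1, mn.2)

noncomputable def Hop (f : F[X]) : MM F →ₗ[F] MM F :=
  Finsupp.lsum F fun mn => (Finsupp.lsingle mn).comp (LinearMap.mulLeft F (Fm f mn.1))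

noncomputable def Yop : MM F →ₗ[F] MM F :=
  Finsupp.lsum F fun mn =>
    (q ^ mn.1 • (Finsupp.lsingle (mn.1, mn.2 + 1)).comp (aeval f).toLinearMap)
      + (Finsupp.lsingle (mn.1 - 1, mn.2)).comp (LinearMap.mulLeft F (Gm q f g mn.1))

@[simp] lemma Xop_single (m n : ℕ) (p : F[X]) :
    Xop (Finsupp.single (m, n) p) = Finsupp.single (m + 1, n) p := by
  simp [Xop, Finsupp.lsum_single]

@[simp] lemma Hop_single (m n : ℕ) (p : F[X]) :
    Hop f (Finsupp.single (m, n) p) = Finsupp.single (m, n) (Fm f m * p) := by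
  simp [Hop, Finsupp.lsum_single, LinearMap.mulLeft_apply]

@[simp] lemma Yop_single (m n : ℕ) (p : F[X]) :
    Yop q f g (Finsupp.single (m, n) p) =
      q ^ m • Finsupp.single (m, n + 1) (p.comp f)
        + Finsupp.single (m - 1, n) (Gm q f g m * p) := by
  simp [Yop, Finsupp.lsum_single, LinearMap.mulLeft_apply, comp_eq_aeval]

lemma Hop_pow_single (k m n : ℕ) (p : F[X]) :
    (Hop f ^ k) (Finsupp.single (m, n) p) = Finsupp.single (m, n) (Fm f m ^ k * p) := by
  induction k generalizing p with
  | zero => simp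
  | succ k ih =>
    rw [pow_succ, Module.End.mul_apply, Hop_single, ih, ← mul_assoc, ← pow_succ]

lemma aeval_Hop_single (u : F[X]) (m n : ℕ) (p : F[X]) :
    (aeval (Hop f) u) (Finsupp.single (m, n) p)
      = Finsupp.single (m, n) (u.comp (Fm f m) * p) := by
  induction u using Polynomial.induction_on' with
  | add u v hu hv =>
    rw [map_add, LinearMap.add_apply, hu, hv, add_comp, add_mul, Finsupp.single_add]
  | monomial k a =>
    rw [aeval_monomial, Module.End.mul_apply, ← C_mul_X_pow_eq_monomial, mul_comp, C_comp,
      X_pow_comp, Hop_pow_single, Algebra.algebraMap_eq_smul_one]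
    simp only [LinearMap.smul_apply, Module.End.one_apply, Finsupp.smul_single]
    congr 1
    rw [smul_eq_C_mul, mul_assoc]

/-- The generator map for the representation. -/
noncomputable def genMap : QGHAGen → Module.End F (MM F)
  | QGHAGen.x => Xop
  | QGHAGen.y => Yop q f g
  | QGHAGen.h => Hop f

noncomputable def rho0 : FreeAlgebra F QGHAGen →ₐ[F] Module.End F (MM F) :=
  FreeAlgebra.lift F (genMap q f g)

lemma rho0_compat : ∀ ⦃u v : FreeAlgebra F QGHAGen⦄, QGHARel F q f g u v →
    rho0 q f g u = rho0 q f g v := by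
  intro u v r
  cases r with
  | hx =>
    rw [map_mul, map_mul, ← aeval_algHom_apply]
    simp only [rho0, FreeAlgebra.lift_ι_apply, genMap]
    refine Finsupp.lhom_ext fun mn p => ?_
    obtain ⟨m, n⟩ := mn
    rw [Module.End.mul_apply, Module.End.mul_apply, Xop_single, Hop_single, aeval_Hop_single,
      Xop_single, Fm_succ']
  | yh =>
    rw [map_mul, map_mul, ← aeval_algHom_apply]
    simp only [rho0, FreeAlgebra.lift_ι_apply, genMap]
    refine Finsupp.lhom_ext fun mn p => ?_
    obtain ⟨m, n⟩ := mn
    rw [Module.End.mul_apply, Module.End.mul_apply, Hop_single, Yop_single, Yop_single, map_add,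
      map_smul, aeval_Hop_single, aeval_Hop_single]
    congr 1
    · rw [mul_comp, ← Fm_succ, Fm_succ']
    · cases m with
      | zero => simp
      | succ s =>
        congr 1
        rw [Nat.add_sub_cancel, ← Fm_succ', mul_left_comm]
  | yx =>
    rw [map_mul, map_add, map_smul, map_mul, ← aeval_algHom_apply]
    simp only [rho0, FreeAlgebra.lift_ι_apply, genMap]
    refine Finsupp.lhom_ext fun mn p => ?_
    obtain ⟨m, n⟩ := mn
    rw [Module.End.mul_apply, LinearMap.add_apply, LinearMap.smul_apply, Module.End.mul_apply,
      Xop_single, Yop_single, Yop_single, map_add, map_smul, Xop_single, Xop_single,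
      aeval_Hop_single]
    cases m with
    | zero =>
      simp [Gm_succ, pow_one, zero_mul, comp_X]
    | succ s =>
      simp only [Nat.add_sub_cancel, smul_add, smul_smul, ← pow_succ', Gm_succ, add_mul,
        smul_mul_assoc, Finsupp.single_add, ← Finsupp.smul_single]
      abel

noncomputable def rho : QGHA F q f g →ₐ[F] Module.End F (MM F) :=
  RingQuot.liftAlgHom F ⟨rho0 q f g, rho0_compat q f g⟩

@[simp] lemma rho_x : rho q f g (QGHA.x q f g) = Xop := by
  have h1 : rho q f g (QGHA.x q f g) = rho0 q f g (FreeAlgebra.ι F QGHAGen.x) :=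
    RingQuot.liftAlgHom_mkAlgHom_apply (S := F) (rho0 q f g) (rho0_compat q f g) _
  rw [h1]
  simp [rho0, FreeAlgebra.lift_ι_apply, genMap]

@[simp] lemma rho_y : rho q f g (QGHA.y q f g) = Yop q f g := by
  have h1 : rho q f g (QGHA.y q f g) = rho0 q f g (FreeAlgebra.ι F QGHAGen.y) :=
    RingQuot.liftAlgHom_mkAlgHom_apply (S := F) (rho0 q f g) (rho0_compat q f g) _
  rw [h1]
  simp [rho0, FreeAlgebra.lift_ι_apply, genMap]

@[simp] lemma rho_h : rho q f g (QGHA.h q f g) = Hop f := by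
  have h1 : rho q f g (QGHA.h q f g) = rho0 q f g (FreeAlgebra.ι F QGHAGen.h) :=
    RingQuot.liftAlgHom_mkAlgHom_apply (S := F) (rho0 q f g) (rho0_compat q f g) _
  rw [h1]
  simp [rho0, FreeAlgebra.lift_ι_apply, genMap]

lemma rho_aeval (u : F[X]) : rho q f g (aeval (QGHA.h q f g) u) = aeval (Hop f) u := by
  rw [← aeval_algHom_apply, rho_h]

/-! ### Identities in the algebra `H_q(f,g)` -/

section Identities

lemma rel_hx : QGHA.h q f g * QGHA.x q f g = QGHA.x q f g * aeval (QGHA.h q f g) f := by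
  have := RingQuot.mkAlgHom_rel F (QGHARel.hx (F := F) (q := q) (f := f) (g := g))
  rw [map_mul, map_mul, ← aeval_algHom_apply] at this
  exact this

lemma rel_yh : QGHA.y q f g * QGHA.h q f g = aeval (QGHA.h q f g) f * QGHA.y q f g := by
  have := RingQuot.mkAlgHom_rel F (QGHARel.yh (F := F) (q := q) (f := f) (g := g))
  rw [map_mul, map_mul, ← aeval_algHom_apply] at this
  exact this

lemma rel_yx : QGHA.y q f g * QGHA.x q f g
    = q • (QGHA.x q f g * QGHA.y q f g) + aeval (QGHA.h q f g) g := by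
  have := RingQuot.mkAlgHom_rel F (QGHARel.yx (F := F) (q := q) (f := f) (g := g))
  rw [map_mul, map_add, map_smul, map_mul, ← aeval_algHom_apply] at this
  exact this

lemma hpow_mul_x (k : ℕ) : QGHA.h q f g ^ k * QGHA.x q f g
    = QGHA.x q f g * aeval (QGHA.h q f g) f ^ k := by
  induction k with
  | zero => rw [pow_zero, pow_zero, one_mul, mul_one]
  | succ k ih =>
    rw [pow_succ, mul_assoc, rel_hx, ← mul_assoc, ih, mul_assoc, ← pow_succ]

lemma y_mul_hpow (k : ℕ) : QGHA.y q f g * QGHA.h q f g ^ k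
    = aeval (QGHA.h q f g) f ^ k * QGHA.y q f g := by
  induction k with
  | zero => rw [pow_zero, pow_zero, one_mul, mul_one]
  | succ k ih =>
    rw [pow_succ', ← mul_assoc, rel_yh, mul_assoc, ih, ← mul_assoc, ← pow_succ']

lemma aeval_mul_x (p : F[X]) :
    aeval (QGHA.h q f g) p * QGHA.x q f g
      = QGHA.x q f g * aeval (QGHA.h q f g) (p.comp f) := by
  induction p using Polynomial.induction_on' with
  | add p r hp hr => rw [map_add, add_mul, hp, hr, add_comp, map_add, mul_add]
  | monomial k a =>
    calc aeval (QGHA.h q f g) (monomial k a) * QGHA.x q f g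
        = algebraMap F _ a * (QGHA.h q f g ^ k * QGHA.x q f g) := by
          rw [aeval_monomial, mul_assoc]
      _ = QGHA.x q f g * (algebraMap F _ a * aeval (QGHA.h q f g) f ^ k) := by
          rw [hpow_mul_x, ← mul_assoc, Algebra.commutes, mul_assoc]
      _ = QGHA.x q f g * aeval (QGHA.h q f g) ((monomial k a).comp f) := by
          rw [← C_mul_X_pow_eq_monomial, mul_comp, C_comp, X_pow_comp, map_mul, map_pow,
            aeval_C]

lemma y_mul_aeval (p : F[X]) :
    QGHA.y q f g * aeval (QGHA.h q f g) p
      = aeval (QGHA.h q f g) (p.comp f) * QGHA.y q f g := by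
  induction p using Polynomial.induction_on' with
  | add p r hp hr => rw [map_add, mul_add, hp, hr, add_comp, map_add, add_mul]
  | monomial k a =>
    calc QGHA.y q f g * aeval (QGHA.h q f g) (monomial k a)
        = algebraMap F _ a * (QGHA.y q f g * QGHA.h q f g ^ k) := by
          rw [aeval_monomial, ← mul_assoc, ← Algebra.commutes, mul_assoc]
      _ = algebraMap F _ a * aeval (QGHA.h q f g) f ^ k * QGHA.y q f g := by
          rw [y_mul_hpow, mul_assoc]
      _ = aeval (QGHA.h q f g) ((monomial k a).comp f) * QGHA.y q f g := by
          rw [← C_mul_X_pow_eq_monomial, mul_comp, C_comp, X_pow_comp, map_mul, map_pow,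
            aeval_C]

lemma aeval_mul_xpow (m : ℕ) (p : F[X]) :
    aeval (QGHA.h q f g) p * QGHA.x q f g ^ m
      = QGHA.x q f g ^ m * aeval (QGHA.h q f g) (p.comp (Fm f m)) := by
  induction m generalizing p with
  | zero => rw [pow_zero, one_mul, mul_one, Fm_zero, comp_X]
  | succ m ih =>
    rw [pow_succ', ← mul_assoc, aeval_mul_x, mul_assoc, ih, ← mul_assoc, ← pow_succ',
      comp_assoc, ← Fm_succ']

lemma ypow_mul_aeval (n : ℕ) (p : F[X]) :
    QGHA.y q f g ^ n * aeval (QGHA.h q f g) p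
      = aeval (QGHA.h q f g) (p.comp (Fm f n)) * QGHA.y q f g ^ n := by
  induction n generalizing p with
  | zero => rw [pow_zero, one_mul, mul_one, Fm_zero, comp_X]
  | succ n ih =>
    rw [pow_succ, mul_assoc, y_mul_aeval, ← mul_assoc, ih, mul_assoc, ← pow_succ,
      comp_assoc, ← Fm_succ']

lemma y_mul_xpow (m : ℕ) :
    QGHA.y q f g * QGHA.x q f g ^ m
      = q ^ m • (QGHA.x q f g ^ m * QGHA.y q f g)
        + QGHA.x q f g ^ (m - 1) * aeval (QGHA.h q f g) (Gm q f g m) := by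
  induction m with
  | zero => simp
  | succ m ih =>
    rw [pow_succ', ← mul_assoc, rel_yx, add_mul, smul_mul_assoc, mul_assoc, ih,
      aeval_mul_xpow, mul_add, smul_add, mul_smul_comm, smul_smul, ← pow_succ',
      ← mul_assoc, ← pow_succ']
    rw [Nat.add_sub_cancel]
    cases m with
    | zero =>
      simp [Gm_succ]
    | succ s =>
      rw [Nat.add_sub_cancel, ← mul_assoc, ← pow_succ', add_assoc]
      congr 1
      rw [← mul_smul_comm, ← map_smul, ← mul_add, ← map_add, ← Gm_succ]

lemma ypow_mul_x (n : ℕ) :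
    QGHA.y q f g ^ n * QGHA.x q f g
      = q ^ n • (QGHA.x q f g * QGHA.y q f g ^ n)
        + aeval (QGHA.h q f g) (Gm q f g n) * QGHA.y q f g ^ (n - 1) := by
  induction n with
  | zero => simp
  | succ n ih =>
    rw [pow_succ', mul_assoc, ih, mul_add, ← mul_assoc, y_mul_aeval, mul_smul_comm,
      ← mul_assoc, rel_yx, add_mul, smul_mul_assoc, smul_add, smul_smul, ← pow_succ,
      Nat.add_sub_cancel, mul_assoc (QGHA.x q f g), add_assoc]
    congr 1
    cases n with
    | zero => simp [Gm_succ]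
    | succ s =>
      rw [mul_assoc, ← pow_succ', ← smul_mul_assoc, ← map_smul, Nat.add_sub_cancel,
        ← add_mul, ← map_add, ← Gm_alt]

lemma h_mul_xpow (m : ℕ) : QGHA.h q f g * QGHA.x q f g ^ m
    = QGHA.x q f g ^ m * aeval (QGHA.h q f g) (Fm f m) := by
  have := aeval_mul_xpow q f g m X
  rwa [aeval_X, X_comp] at this

lemma ypow_mul_h (n : ℕ) : QGHA.y q f g ^ n * QGHA.h q f g
    = aeval (QGHA.h q f g) (Fm f n) * QGHA.y q f g ^ n := by
  have := ypow_mul_aeval q f g n X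
  rwa [aeval_X, X_comp] at this

/-- Normal-form monomial `x^m p(h) y^n`. -/
noncomputable def E (m : ℕ) (p : F[X]) (n : ℕ) : QGHA F q f g :=
  QGHA.x q f g ^ m * (aeval (QGHA.h q f g) p * QGHA.y q f g ^ n)

lemma E_one : E q f g 0 1 0 = 1 := by simp [E]

lemma x_mul_E (m : ℕ) (p : F[X]) (n : ℕ) :
    QGHA.x q f g * E q f g m p n = E q f g (m + 1) p n := by
  rw [E, E, ← mul_assoc, ← pow_succ']

lemma h_mul_E (m : ℕ) (p : F[X]) (n : ℕ) :
    QGHA.h q f g * E q f g m p n = E q f g m (Fm f m * p) n := by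
  rw [E, E, ← mul_assoc, h_mul_xpow, mul_assoc, ← mul_assoc (aeval (QGHA.h q f g) (Fm f m)),
    ← map_mul]

lemma y_mul_E (m : ℕ) (p : F[X]) (n : ℕ) :
    QGHA.y q f g * E q f g m p n
      = q ^ m • E q f g m (p.comp f) (n + 1) + E q f g (m - 1) (Gm q f g m * p) n := by
  have h3 : aeval (QGHA.h q f g) (Gm q f g m * p) * QGHA.y q f g ^ n
      = aeval (QGHA.h q f g) (Gm q f g m)
        * (aeval (QGHA.h q f g) p * QGHA.y q f g ^ n) := by
    rw [map_mul, mul_assoc]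
  rw [E, E, E, ← mul_assoc, y_mul_xpow, add_mul, smul_mul_assoc, mul_assoc, ← mul_assoc
    (QGHA.y q f g), y_mul_aeval, mul_assoc, mul_assoc, ← pow_succ', h3]

lemma E_mul_x (m : ℕ) (p : F[X]) (n : ℕ) :
    E q f g m p n * QGHA.x q f g
      = q ^ n • E q f g (m + 1) (p.comp f) n + E q f g m (p * Gm q f g n) (n - 1) := by
  have h2 : aeval (QGHA.h q f g) p * (QGHA.x q f g * QGHA.y q f g ^ n)
      = QGHA.x q f g * (aeval (QGHA.h q f g) (p.comp f) * QGHA.y q f g ^ n) := by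
    rw [← mul_assoc, aeval_mul_x, mul_assoc]
  have h3 : aeval (QGHA.h q f g) p
        * (aeval (QGHA.h q f g) (Gm q f g n) * QGHA.y q f g ^ (n - 1))
      = aeval (QGHA.h q f g) (p * Gm q f g n) * QGHA.y q f g ^ (n - 1) := by
    rw [← mul_assoc, ← map_mul]
  rw [E, E, E, mul_assoc, mul_assoc, ypow_mul_x, mul_add, mul_add, mul_smul_comm, h2,
    mul_smul_comm, ← mul_assoc, ← pow_succ, h3]

lemma E_mul_h (m : ℕ) (p : F[X]) (n : ℕ) :
    E q f g m p n * QGHA.h q f g = E q f g m (p * Fm f n) n := by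
  have h3 : aeval (QGHA.h q f g) p
        * (aeval (QGHA.h q f g) (Fm f n) * QGHA.y q f g ^ n)
      = aeval (QGHA.h q f g) (p * Fm f n) * QGHA.y q f g ^ n := by
    rw [← mul_assoc, ← map_mul]
  rw [E, E, mul_assoc, mul_assoc, ypow_mul_h, h3]

lemma E_mul_y (m : ℕ) (p : F[X]) (n : ℕ) :
    E q f g m p n * QGHA.y q f g = E q f g m p (n + 1) := by
  rw [E, E, mul_assoc, mul_assoc, ← pow_succ]

/-- The "vacuum vector" evaluation map. -/
noncomputable def Phi : QGHA F q f g →ₗ[F] MM F where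
  toFun w := rho q f g w (Finsupp.single (0, 0) 1)
  map_add' u v := by rw [map_add]; rfl
  map_smul' c v := by rw [map_smul]; rfl

lemma Phi_apply (w : QGHA F q f g) :
    Phi q f g w = rho q f g w (Finsupp.single (0, 0) 1) := rfl

lemma Phi_mul (u w : QGHA F q f g) :
    Phi q f g (u * w) = rho q f g u (Phi q f g w) := by
  rw [Phi_apply, Phi_apply, map_mul]; rfl

lemma Yop_pow_v0 (n : ℕ) :
    (Yop q f g ^ n) (Finsupp.single ((0 : ℕ), (0 : ℕ)) (1 : F[X]))
      = Finsupp.single (0, n) 1 := by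
  induction n with
  | zero => rw [pow_zero, Module.End.one_apply]
  | succ n ih =>
    rw [pow_succ', Module.End.mul_apply, ih, Yop_single]
    simp [one_comp]

lemma Xop_pow_single (m j n : ℕ) (p : F[X]) :
    (Xop ^ m) (Finsupp.single (j, n) p) = Finsupp.single (j + m, n) p := by
  induction m generalizing j with
  | zero => simp
  | succ m ih =>
    have hkey : j + 1 + m = j + (m + 1) := by omega
    rw [pow_succ, Module.End.mul_apply, Xop_single, ih, hkey]

lemma Phi_E (m : ℕ) (p : F[X]) (n : ℕ) :
    Phi q f g (E q f g m p n) = Finsupp.single (m, n) p := by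
  rw [Phi_apply, E, map_mul, map_mul, map_pow, map_pow, rho_x, rho_y, rho_aeval,
    Module.End.mul_apply, Module.End.mul_apply, Yop_pow_v0, aeval_Hop_single]
  rw [Xop_pow_single]
  simp

/-- The normal-form inclusion `⊕ x^m F[h] y^n → H`. -/
noncomputable def Psi : MM F →ₗ[F] QGHA F q f g :=
  Finsupp.lsum F fun mn => (LinearMap.mulLeft F (QGHA.x q f g ^ mn.1)).comp
    ((LinearMap.mulRight F (QGHA.y q f g ^ mn.2)).comp (aeval (QGHA.h q f g)).toLinearMap)

lemma Psi_single (m : ℕ) (p : F[X]) (n : ℕ) :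
    Psi q f g (Finsupp.single (m, n) p) = E q f g m p n := by
  simp [Psi, Finsupp.lsum_single, E, LinearMap.mulLeft_apply, LinearMap.mulRight_apply]

lemma Phi_Psi (v : MM F) : Phi q f g (Psi q f g v) = v := by
  have h1 : (Phi q f g).comp (Psi q f g) = LinearMap.id :=
    Finsupp.lhom_ext fun mn p => by
      obtain ⟨m, n⟩ := mn
      simp [Psi_single, Phi_E]
  exact LinearMap.congr_fun h1 v

lemma mul_psi_mem (w : QGHA F q f g) (v : MM F) :
    w * Psi q f g v ∈ LinearMap.range (Psi q f g) := by
  obtain ⟨u, rfl⟩ := RingQuot.mkAlgHom_surjective F (QGHARel F q f g) w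
  induction u using FreeAlgebra.induction generalizing v with
  | grade0 r =>
    refine ⟨r • v, ?_⟩
    rw [map_smul, Algebra.smul_def]
    congr 1
    exact (AlgHom.commutes (RingQuot.mkAlgHom F (QGHARel F q f g)) r).symm
  | grade1 t =>
    cases t with
    | x =>
      induction v using Finsupp.induction_linear with
      | zero => erw [map_zero, mul_zero]; exact zero_mem _
      | add a b ha hb => erw [map_add, mul_add]; exact add_mem ha hb
      | single mn p =>
        obtain ⟨m, n⟩ := mn
        rw [Psi_single, show RingQuot.mkAlgHom F (QGHARel F q f g)
          (FreeAlgebra.ι F QGHAGen.x) = QGHA.x q f g from rfl, x_mul_E, ← Psi_single]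
        exact ⟨_, rfl⟩
    | y =>
      induction v using Finsupp.induction_linear with
      | zero => erw [map_zero, mul_zero]; exact zero_mem _
      | add a b ha hb => erw [map_add, mul_add]; exact add_mem ha hb
      | single mn p =>
        obtain ⟨m, n⟩ := mn
        rw [Psi_single, show RingQuot.mkAlgHom F (QGHARel F q f g)
          (FreeAlgebra.ι F QGHAGen.y) = QGHA.y q f g from rfl, y_mul_E, ← Psi_single,
          ← Psi_single, ← map_smul, ← map_add]
        exact ⟨_, rfl⟩
    | h =>
      induction v using Finsupp.induction_linear with
      | zero => erw [map_zero, mul_zero]; exact zero_mem _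
      | add a b ha hb => erw [map_add, mul_add]; exact add_mem ha hb
      | single mn p =>
        obtain ⟨m, n⟩ := mn
        rw [Psi_single, show RingQuot.mkAlgHom F (QGHARel F q f g)
          (FreeAlgebra.ι F QGHAGen.h) = QGHA.h q f g from rfl, h_mul_E, ← Psi_single]
        exact ⟨_, rfl⟩
  | mul a b ha hb =>
    erw [map_mul, mul_assoc]
    obtain ⟨v', hv'⟩ := hb v
    rw [← hv']
    exact ha v'
  | add a b ha hb =>
    erw [map_add, add_mul (R := QGHA F q f g)]
    exact add_mem (ha v) (hb v)

lemma Psi_surjective (w : QGHA F q f g) : w ∈ LinearMap.range (Psi q f g) := by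
  have h1 : w * Psi q f g (Finsupp.single (0, 0) 1) ∈ LinearMap.range (Psi q f g) :=
    mul_psi_mem q f g w _
  rwa [Psi_single, E_one, mul_one] at h1

lemma Psi_Phi (w : QGHA F q f g) : Psi q f g (Phi q f g w) = w := by
  obtain ⟨v, rfl⟩ := Psi_surjective q f g w
  rw [Phi_Psi]

/-! ### Right multiplication operators and coordinate extraction -/

noncomputable def Rh (f : F[X]) : MM F →ₗ[F] MM F :=
  Finsupp.lsum F fun mn => (Finsupp.lsingle mn).comp (LinearMap.mulRight F (Fm f mn.2))

noncomputable def Rx : MM F →ₗ[F] MM F :=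
  Finsupp.lsum F fun mn =>
    (q ^ mn.2 • (Finsupp.lsingle (mn.1 + 1, mn.2)).comp (aeval f).toLinearMap)
      + (Finsupp.lsingle (mn.1, mn.2 - 1)).comp (LinearMap.mulRight F (Gm q f g mn.2))

@[simp] lemma Rh_single (m n : ℕ) (p : F[X]) :
    Rh f (Finsupp.single (m, n) p) = Finsupp.single (m, n) (p * Fm f n) := by
  simp [Rh, Finsupp.lsum_single, LinearMap.mulRight_apply]

@[simp] lemma Rx_single (m n : ℕ) (p : F[X]) :
    Rx q f g (Finsupp.single (m, n) p) =
      q ^ n • Finsupp.single (m + 1, n) (p.comp f)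
        + Finsupp.single (m, n - 1) (p * Gm q f g n) := by
  simp [Rx, Finsupp.lsum_single, LinearMap.mulRight_apply, comp_eq_aeval]

lemma Phi_mul_h (w : QGHA F q f g) :
    Phi q f g (w * QGHA.h q f g) = Rh f (Phi q f g w) := by
  obtain ⟨v, rfl⟩ := Psi_surjective q f g w
  induction v using Finsupp.induction_linear with
  | zero => simp
  | add a b ha hb =>
    rw [map_add, add_mul, map_add, map_add, ha, hb]
    exact (map_add _ _ _).symm
  | single mn p =>
    obtain ⟨m, n⟩ := mn
    rw [Psi_single, E_mul_h, Phi_E, Phi_E, Rh_single]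

lemma Phi_mul_x (w : QGHA F q f g) :
    Phi q f g (w * QGHA.x q f g) = Rx q f g (Phi q f g w) := by
  obtain ⟨v, rfl⟩ := Psi_surjective q f g w
  induction v using Finsupp.induction_linear with
  | zero => simp
  | add a b ha hb =>
    rw [map_add, add_mul, map_add, map_add, ha, hb]
    exact (map_add _ _ _).symm
  | single mn p =>
    obtain ⟨m, n⟩ := mn
    rw [Psi_single, E_mul_x, Phi_E, map_add, map_smul, Phi_E, Phi_E, Rx_single]

lemma lsum_point (T : (ℕ × ℕ) → (F[X] →ₗ[F] MM F)) (P : MM F) (s : ℕ × ℕ) :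
    (Finsupp.lsum F T P) s = ∑ mn ∈ P.support, (T mn (P mn)) s := by
  rw [Finsupp.lsum_apply, Finsupp.sum, Finsupp.finset_sum_apply]

lemma Hop_apply (P : MM F) (j k : ℕ) : (Hop f P) (j, k) = Fm f j * P (j, k) := by
  rw [Hop, lsum_point]
  have h1 : ∀ mn ∈ P.support,
      ((((Finsupp.lsingle mn).comp (LinearMap.mulLeft F (Fm f mn.1))) (P mn)) (j, k))
        = if mn = (j, k) then Fm f mn.1 * P mn else 0 := by
    intro mn _
    rw [LinearMap.comp_apply, LinearMap.mulLeft_apply, Finsupp.lsingle_apply,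
      Finsupp.single_apply]
  rw [Finset.sum_congr rfl h1, Finset.sum_ite_eq' P.support (j, k) fun mn => Fm f mn.1 * P mn]
  split_ifs with hmem
  · rfl
  · rw [Finsupp.notMem_support_iff.mp hmem, mul_zero]

lemma Rh_apply (P : MM F) (j k : ℕ) : (Rh f P) (j, k) = P (j, k) * Fm f k := by
  rw [Rh, lsum_point]
  have h1 : ∀ mn ∈ P.support,
      ((((Finsupp.lsingle mn).comp (LinearMap.mulRight F (Fm f mn.2))) (P mn)) (j, k))
        = if mn = (j, k) then P mn * Fm f mn.2 else 0 := by
    intro mn _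
    rw [LinearMap.comp_apply, LinearMap.mulRight_apply, Finsupp.lsingle_apply,
      Finsupp.single_apply]
  rw [Finset.sum_congr rfl h1, Finset.sum_ite_eq' P.support (j, k) fun mn => P mn * Fm f mn.2]
  split_ifs with hmem
  · rfl
  · rw [Finsupp.notMem_support_iff.mp hmem, zero_mul]

lemma Xop_apply_succ (P : MM F) (j k : ℕ) : (Xop P) (j + 1, k) = P (j, k) := by
  rw [Xop, lsum_point]
  have h1 : ∀ mn ∈ P.support,
      ((Finsupp.lsingle (R := F) (mn.1 + 1, mn.2) (P mn)) ((j + 1, k) : ℕ × ℕ))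
        = if mn = (j, k) then P mn else 0 := by
    intro mn _
    obtain ⟨a, b⟩ := mn
    rw [Finsupp.lsingle_apply, Finsupp.single_apply]
    by_cases hc : ((a : ℕ), (b : ℕ)) = ((j : ℕ), (k : ℕ))
    · obtain ⟨rfl, rfl⟩ : a = j ∧ b = k := by simpa [Prod.ext_iff] using hc
      simp
    · have hne : ¬(((a + 1 : ℕ), (b : ℕ)) = ((j + 1 : ℕ), (k : ℕ))) := by
        intro hcc
        apply hc
        simp only [Prod.mk.injEq] at hcc ⊢
        omega
      rw [if_neg hne, if_neg hc]
  rw [Finset.sum_congr rfl h1, Finset.sum_ite_eq' P.support ((j : ℕ), (k : ℕ)) fun mn => P mn]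
  split_ifs with hmem
  · rfl
  · exact (Finsupp.notMem_support_iff.mp hmem).symm

lemma Rx_apply_succ (P : MM F) (j k : ℕ) :
    (Rx q f g P) (j + 1, k)
      = q ^ k • (P (j, k)).comp f + P (j + 1, k + 1) * Gm q f g (k + 1) := by
  rw [Rx, lsum_point]
  have h1 : ∀ mn ∈ P.support,
      ((((q ^ mn.2 • (Finsupp.lsingle (mn.1 + 1, mn.2)).comp (aeval f).toLinearMap)
        + (Finsupp.lsingle (mn.1, mn.2 - 1)).comp
            (LinearMap.mulRight F (Gm q f g mn.2)) : F[X] →ₗ[F] MM F) (P mn))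
          ((j + 1, k) : ℕ × ℕ))
        = (if mn = (j, k) then q ^ mn.2 • (P mn).comp f else 0)
          + (if mn = (j + 1, k + 1) then P mn * Gm q f g mn.2 else 0) := by
    intro mn _
    obtain ⟨a, b⟩ := mn
    rw [LinearMap.add_apply, LinearMap.smul_apply, LinearMap.comp_apply,
      LinearMap.comp_apply, LinearMap.mulRight_apply, Finsupp.lsingle_apply,
      Finsupp.lsingle_apply, Finsupp.add_apply, Finsupp.smul_apply,
      Finsupp.single_apply, Finsupp.single_apply]
    congr 1
    · rw [AlgHom.toLinearMap_apply, ← comp_eq_aeval]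
      by_cases hc : ((a : ℕ), (b : ℕ)) = ((j : ℕ), (k : ℕ))
      · obtain ⟨rfl, rfl⟩ : a = j ∧ b = k := by simpa [Prod.ext_iff] using hc
        simp
      · have hne : ¬(((a + 1 : ℕ), (b : ℕ)) = ((j + 1 : ℕ), (k : ℕ))) := by
          intro hcc
          apply hc
          simp only [Prod.mk.injEq] at hcc ⊢
          omega
        rw [if_neg hne, if_neg hc, smul_zero]
    · by_cases hc : ((a : ℕ), (b : ℕ)) = ((j + 1 : ℕ), (k + 1 : ℕ))
      · obtain ⟨rfl, rfl⟩ : a = j + 1 ∧ b = k + 1 := by simpa [Prod.ext_iff] using hc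
        simp
      · rw [if_neg hc]
        by_cases hcc : ((a : ℕ), (b - 1 : ℕ)) = ((j + 1 : ℕ), (k : ℕ))
        · rw [if_pos hcc]
          obtain ⟨h1', h2'⟩ : a = j + 1 ∧ b - 1 = k := by simpa [Prod.ext_iff] using hcc
          have hb : b = 0 := by
            by_contra hb0
            apply hc
            simp only [Prod.mk.injEq]
            omega
          rw [hb, Gm_zero, mul_zero]
        · rw [if_neg hcc]
  rw [Finset.sum_congr rfl h1, Finset.sum_add_distrib,
    Finset.sum_ite_eq' P.support ((j : ℕ), (k : ℕ)) fun mn => q ^ mn.2 • (P mn).comp f,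
    Finset.sum_ite_eq' P.support ((j + 1 : ℕ), (k + 1 : ℕ)) fun mn => P mn * Gm q f g mn.2]
  congr 1
  · split_ifs with hmem
    · rfl
    · rw [Finsupp.notMem_support_iff.mp hmem, zero_comp, smul_zero]
  · split_ifs with hmem
    · rfl
    · rw [Finsupp.notMem_support_iff.mp hmem, zero_mul]

lemma Yop_apply_succ (P : MM F) (j k : ℕ) :
    (Yop q f g P) (j, k + 1)
      = q ^ j • (P (j, k)).comp f + Gm q f g (j + 1) * P (j + 1, k + 1) := by
  rw [Yop, lsum_point]
  have h1 : ∀ mn ∈ P.support,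
      ((((q ^ mn.1 • (Finsupp.lsingle (mn.1, mn.2 + 1)).comp (aeval f).toLinearMap)
        + (Finsupp.lsingle (mn.1 - 1, mn.2)).comp
            (LinearMap.mulLeft F (Gm q f g mn.1)) : F[X] →ₗ[F] MM F) (P mn))
          ((j, k + 1) : ℕ × ℕ))
        = (if mn = (j, k) then q ^ mn.1 • (P mn).comp f else 0)
          + (if mn = (j + 1, k + 1) then Gm q f g mn.1 * P mn else 0) := by
    intro mn _
    obtain ⟨a, b⟩ := mn
    rw [LinearMap.add_apply, LinearMap.smul_apply, LinearMap.comp_apply,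
      LinearMap.comp_apply, LinearMap.mulLeft_apply, Finsupp.lsingle_apply,
      Finsupp.lsingle_apply, Finsupp.add_apply, Finsupp.smul_apply,
      Finsupp.single_apply, Finsupp.single_apply]
    congr 1
    · rw [AlgHom.toLinearMap_apply, ← comp_eq_aeval]
      by_cases hc : ((a : ℕ), (b : ℕ)) = ((j : ℕ), (k : ℕ))
      · obtain ⟨rfl, rfl⟩ : a = j ∧ b = k := by simpa [Prod.ext_iff] using hc
        simp
      · have hne : ¬(((a : ℕ), (b + 1 : ℕ)) = ((j : ℕ), (k + 1 : ℕ))) := by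
          intro hcc
          apply hc
          simp only [Prod.mk.injEq] at hcc ⊢
          omega
        rw [if_neg hne, if_neg hc, smul_zero]
    · by_cases hc : ((a : ℕ), (b : ℕ)) = ((j + 1 : ℕ), (k + 1 : ℕ))
      · obtain ⟨rfl, rfl⟩ : a = j + 1 ∧ b = k + 1 := by simpa [Prod.ext_iff] using hc
        simp
      · rw [if_neg hc]
        by_cases hcc : ((a - 1 : ℕ), (b : ℕ)) = ((j : ℕ), (k + 1 : ℕ))
        · rw [if_pos hcc]
          obtain ⟨h1', h2'⟩ : a - 1 = j ∧ b = k + 1 := by simpa [Prod.ext_iff] using hcc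
          have ha : a = 0 := by
            by_contra ha0
            apply hc
            simp only [Prod.mk.injEq]
            omega
          rw [ha, Gm_zero, zero_mul]
        · rw [if_neg hcc]
  rw [Finset.sum_congr rfl h1, Finset.sum_add_distrib,
    Finset.sum_ite_eq' P.support ((j : ℕ), (k : ℕ)) fun mn => q ^ mn.1 • (P mn).comp f,
    Finset.sum_ite_eq' P.support ((j + 1 : ℕ), (k + 1 : ℕ))
      fun mn => Gm q f g mn.1 * P mn]
  congr 1
  · split_ifs with hmem
    · rfl
    · rw [Finsupp.notMem_support_iff.mp hmem, zero_comp, smul_zero]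
  · split_ifs with hmem
    · rfl
    · rw [Finsupp.notMem_support_iff.mp hmem, mul_zero]

lemma Yop_apply_zero (P : MM F) (j : ℕ) :
    (Yop q f g P) (j, 0) = Gm q f g (j + 1) * P (j + 1, 0) := by
  rw [Yop, lsum_point]
  have h1 : ∀ mn ∈ P.support,
      ((((q ^ mn.1 • (Finsupp.lsingle (mn.1, mn.2 + 1)).comp (aeval f).toLinearMap)
        + (Finsupp.lsingle (mn.1 - 1, mn.2)).comp
            (LinearMap.mulLeft F (Gm q f g mn.1)) : F[X] →ₗ[F] MM F) (P mn))
          ((j, 0) : ℕ × ℕ))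
        = if mn = (j + 1, 0) then Gm q f g mn.1 * P mn else 0 := by
    intro mn _
    obtain ⟨a, b⟩ := mn
    rw [LinearMap.add_apply, LinearMap.smul_apply, LinearMap.comp_apply,
      LinearMap.comp_apply, LinearMap.mulLeft_apply, Finsupp.lsingle_apply,
      Finsupp.lsingle_apply, Finsupp.add_apply, Finsupp.smul_apply,
      Finsupp.single_apply, Finsupp.single_apply]
    have hne : ¬(((a : ℕ), (b + 1 : ℕ)) = ((j : ℕ), (0 : ℕ))) := by
      intro hcc
      obtain ⟨h1', h2'⟩ : a = j ∧ b + 1 = 0 := by simpa [Prod.ext_iff] using hcc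
      omega
    rw [if_neg hne, smul_zero, zero_add]
    by_cases hc : ((a : ℕ), (b : ℕ)) = ((j + 1 : ℕ), (0 : ℕ))
    · obtain ⟨rfl, rfl⟩ : a = j + 1 ∧ b = 0 := by simpa [Prod.ext_iff] using hc
      simp
    · rw [if_neg hc]
      by_cases hcc : ((a - 1 : ℕ), (b : ℕ)) = ((j : ℕ), (0 : ℕ))
      · rw [if_pos hcc]
        obtain ⟨h1', h2'⟩ : a - 1 = j ∧ b = 0 := by simpa [Prod.ext_iff] using hcc
        have ha : a = 0 := by
          by_contra ha0
          apply hc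
          simp only [Prod.mk.injEq]
          omega
        rw [ha, Gm_zero, zero_mul]
      · rw [if_neg hcc]
  rw [Finset.sum_congr rfl h1,
    Finset.sum_ite_eq' P.support ((j + 1 : ℕ), (0 : ℕ)) fun mn => Gm q f g mn.1 * P mn]
  split_ifs with hmem
  · rfl
  · rw [Finsupp.notMem_support_iff.mp hmem, mul_zero]

lemma aeval_Hop_apply (u : F[X]) (P : MM F) (j k : ℕ) :
    ((aeval (Hop f) u) P) (j, k) = u.comp (Fm f j) * P (j, k) := by
  induction P using Finsupp.induction_linear with
  | zero => rw [map_zero, Finsupp.coe_zero, Pi.zero_apply, mul_zero]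
  | add a b ha hb => rw [map_add, Finsupp.add_apply, Finsupp.add_apply, ha, hb, mul_add]
  | single mn p =>
    obtain ⟨m, n⟩ := mn
    rw [aeval_Hop_single]
    rw [Finsupp.single_apply, Finsupp.single_apply]
    by_cases hc : ((m : ℕ), (n : ℕ)) = ((j : ℕ), (k : ℕ))
    · obtain ⟨rfl, rfl⟩ : m = j ∧ n = k := by simpa [Prod.ext_iff] using hc
      simp
    · rw [if_neg hc, if_neg hc, mul_zero]

/-! ### Degree facts and diagonality -/

lemma natDegree_f_ge (hf : 1 < f.degree) : 2 ≤ f.natDegree := by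
  have hf0 : f ≠ 0 := by
    intro h
    rw [h, degree_zero] at hf
    exact absurd hf (by simp)
  have h1 : (1 : WithBot ℕ) < (f.natDegree : WithBot ℕ) := by
    rw [← degree_eq_natDegree hf0]
    exact hf
  have h2 : 1 < f.natDegree := by exact_mod_cast h1
  omega

lemma Fm_natDegree (m : ℕ) : (Fm f m).natDegree = f.natDegree ^ m := by
  induction m with
  | zero => simp
  | succ m ih => rw [Fm_succ, natDegree_comp, ih, pow_succ]

lemma Fm_ne (hf : 1 < f.degree) {j k : ℕ} (hjk : j ≠ k) : Fm f j ≠ Fm f k := by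
  intro he
  apply hjk
  have hd := congrArg natDegree he
  rw [Fm_natDegree, Fm_natDegree] at hd
  exact Nat.pow_right_injective (natDegree_f_ge f hf) hd

lemma diag (hf : 1 < f.degree) (c : QGHA F q f g)
    (hc : QGHA.h q f g * c = c * QGHA.h q f g)
    {j k : ℕ} (hjk : j ≠ k) : Phi q f g c (j, k) = 0 := by
  have h1 : Hop f (Phi q f g c) = Rh f (Phi q f g c) := by
    have h0 := congrArg (Phi q f g) hc
    rw [Phi_mul, Phi_mul_h, rho_h] at h0
    exact h0
  have h2 := DFunLike.congr_fun h1 ((j, k) : ℕ × ℕ)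
  rw [Hop_apply, Rh_apply] at h2
  have h3 : (Fm f j - Fm f k) * Phi q f g c (j, k) = 0 := by
    rw [sub_mul, h2, mul_comm, sub_self]
  rcases mul_eq_zero.mp h3 with h | h
  · exact absurd (sub_eq_zero.mp h) (Fm_ne f hf hjk)
  · exact h

lemma eqA (c : QGHA F q f g) (hc : QGHA.x q f g * c = c * QGHA.x q f g) (m : ℕ) :
    Phi q f g c (m, m)
      = q ^ m • (Phi q f g c (m, m)).comp f
        + Phi q f g c (m + 1, m + 1) * Gm q f g (m + 1) := by
  have h1 : Xop (Phi q f g c) = Rx q f g (Phi q f g c) := by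
    have h0 := congrArg (Phi q f g) hc
    rw [Phi_mul, Phi_mul_x, rho_x] at h0
    exact h0
  have h2 := DFunLike.congr_fun h1 ((m + 1, m) : ℕ × ℕ)
  rw [Xop_apply_succ, Rx_apply_succ] at h2
  exact h2

/-! ### The central element `Z` -/

/-- `Z = q (xy - a(h))`. -/
noncomputable def Zel (a : F[X]) : QGHA F q f g :=
  q • (QGHA.x q f g * QGHA.y q f g - aeval (QGHA.h q f g) a)

lemma Zel_def (a : F[X]) :
    Zel q f g a = q • (QGHA.x q f g * QGHA.y q f g - aeval (QGHA.h q f g) a) := rfl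

variable (a : F[X])

lemma aeval_comm (u : F[X]) :
    aeval (QGHA.h q f g) u * QGHA.h q f g = QGHA.h q f g * aeval (QGHA.h q f g) u := by
  calc aeval (QGHA.h q f g) u * QGHA.h q f g
      = aeval (QGHA.h q f g) u * aeval (QGHA.h q f g) X := by rw [aeval_X]
    _ = aeval (QGHA.h q f g) (u * X) := (map_mul _ _ _).symm
    _ = aeval (QGHA.h q f g) (X * u) := by rw [mul_comm]
    _ = aeval (QGHA.h q f g) X * aeval (QGHA.h q f g) u := map_mul _ _ _
    _ = QGHA.h q f g * aeval (QGHA.h q f g) u := by rw [aeval_X]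

lemma xy_h_comm : (QGHA.x q f g * QGHA.y q f g) * QGHA.h q f g
    = QGHA.h q f g * (QGHA.x q f g * QGHA.y q f g) := by
  rw [mul_assoc, rel_yh, ← mul_assoc, ← rel_hx, mul_assoc]

lemma Zel_mul_h : Zel q f g a * QGHA.h q f g = QGHA.h q f g * Zel q f g a := by
  rw [Zel_def, smul_mul_assoc, sub_mul, xy_h_comm, aeval_comm, ← mul_sub, mul_smul_comm]

lemma aeval_g_eq (hg : g = a.comp f - q • a) : aeval (QGHA.h q f g) g
    = aeval (QGHA.h q f g) (a.comp f) - q • aeval (QGHA.h q f g) a := by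
  rw [hg, map_sub, map_smul]

lemma Zel_mul_x (hg : g = a.comp f - q • a) : Zel q f g a * QGHA.x q f g = q • (QGHA.x q f g * Zel q f g a) := by
  have key : QGHA.x q f g * (q • (QGHA.x q f g * QGHA.y q f g) + aeval (QGHA.h q f g) g)
        - QGHA.x q f g * aeval (QGHA.h q f g) (a.comp f)
      = QGHA.x q f g * (q • (QGHA.x q f g * QGHA.y q f g - aeval (QGHA.h q f g) a)) := by
    rw [aeval_g_eq q f g a hg, ← mul_sub]
    congr 1
    rw [smul_sub]
    abel
  rw [Zel_def, smul_mul_assoc, sub_mul, mul_assoc, rel_yx, aeval_mul_x, key, mul_smul_comm]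

lemma y_mul_Zel (hg : g = a.comp f - q • a) : QGHA.y q f g * Zel q f g a = q • (Zel q f g a * QGHA.y q f g) := by
  have key : (q • (QGHA.x q f g * QGHA.y q f g) + aeval (QGHA.h q f g) g)
          * QGHA.y q f g
        - aeval (QGHA.h q f g) (a.comp f) * QGHA.y q f g
      = (q • (QGHA.x q f g * QGHA.y q f g - aeval (QGHA.h q f g) a)) * QGHA.y q f g := by
    rw [aeval_g_eq q f g a hg, ← sub_mul]
    congr 1
    rw [smul_sub]
    abel
  rw [Zel_def, mul_smul_comm, mul_sub, ← mul_assoc, rel_yx, y_mul_aeval, key, smul_mul_assoc]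

lemma Zel_pow_mul_x (hg : g = a.comp f - q • a) (k : ℕ) :
    Zel q f g a ^ k * QGHA.x q f g = q ^ k • (QGHA.x q f g * Zel q f g a ^ k) := by
  induction k with
  | zero => simp
  | succ k ih =>
    rw [pow_succ, mul_assoc, Zel_mul_x q f g a hg, mul_smul_comm, ← mul_assoc, ih,
      smul_mul_assoc, smul_smul, ← pow_succ', mul_assoc]

lemma y_mul_Zel_pow (hg : g = a.comp f - q • a) (k : ℕ) :
    QGHA.y q f g * Zel q f g a ^ k = q ^ k • (Zel q f g a ^ k * QGHA.y q f g) := by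
  induction k with
  | zero => simp
  | succ k ih =>
    rw [pow_succ', ← mul_assoc, y_mul_Zel q f g a hg, smul_mul_assoc, mul_assoc, ih,
      mul_smul_comm, smul_smul, ← pow_succ', ← mul_assoc]

lemma Zel_pow_mul_h (k : ℕ) :
    Zel q f g a ^ k * QGHA.h q f g = QGHA.h q f g * Zel q f g a ^ k := by
  induction k with
  | zero => simp
  | succ k ih =>
    rw [pow_succ, mul_assoc, Zel_mul_h, ← mul_assoc, ih, mul_assoc]

lemma adjoin_xyh :
    Algebra.adjoin F {QGHA.x q f g, QGHA.y q f g, QGHA.h q f g} = ⊤ := by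
  rw [eq_top_iff]
  rintro w -
  obtain ⟨u, rfl⟩ := RingQuot.mkAlgHom_surjective F (QGHARel F q f g) w
  induction u using FreeAlgebra.induction with
  | grade0 r =>
    have hmap : (RingQuot.mkAlgHom F (QGHARel F q f g)) (algebraMap F _ r)
        = algebraMap F (QGHA F q f g) r := AlgHom.commutes _ r
    rw [hmap]
    exact Subalgebra.algebraMap_mem _ r
  | grade1 t =>
    cases t with
    | x => exact Algebra.subset_adjoin (by left; rfl)
    | y => exact Algebra.subset_adjoin (by right; left; rfl)
    | h => exact Algebra.subset_adjoin (by right; right; rfl)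
  | mul u v hu hv => rw [map_mul]; exact mul_mem hu hv
  | add u v hu hv => rw [map_add]; exact add_mem hu hv

lemma mem_center_of_gen_comm {z : QGHA F q f g}
    (hx : z * QGHA.x q f g = QGHA.x q f g * z)
    (hy : z * QGHA.y q f g = QGHA.y q f g * z)
    (hh : z * QGHA.h q f g = QGHA.h q f g * z) :
    z ∈ Subalgebra.center F (QGHA F q f g) := by
  rw [Subalgebra.mem_center_iff]
  intro b
  have hle : Algebra.adjoin F {QGHA.x q f g, QGHA.y q f g, QGHA.h q f g}
      ≤ Subalgebra.centralizer F ({z} : Set (QGHA F q f g)) := by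
    apply Algebra.adjoin_le
    rintro t (rfl | rfl | rfl)
    · show _ ∈ Subalgebra.centralizer F ({z} : Set (QGHA F q f g))
      rw [Subalgebra.mem_centralizer_iff]
      rintro zz rfl
      exact hx
    · show _ ∈ Subalgebra.centralizer F ({z} : Set (QGHA F q f g))
      rw [Subalgebra.mem_centralizer_iff]
      rintro zz rfl
      exact hy
    · show _ ∈ Subalgebra.centralizer F ({z} : Set (QGHA F q f g))
      rw [Subalgebra.mem_centralizer_iff]
      rintro zz rfl
      exact hh
  have hb : b ∈ Subalgebra.centralizer F ({z} : Set (QGHA F q f g)) := by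
    apply hle
    rw [adjoin_xyh]
    trivial
  exact ((Subalgebra.mem_centralizer_iff F).mp hb z rfl).symm

lemma Zel_pow_central (hg : g = a.comp f - q • a) {k : ℕ} (hk : q ^ k = 1) :
    Zel q f g a ^ k ∈ Subalgebra.center F (QGHA F q f g) := by
  apply mem_center_of_gen_comm
  · rw [Zel_pow_mul_x q f g a hg k, hk, one_smul]
  · rw [y_mul_Zel_pow q f g a hg k, hk, one_smul]
  · exact Zel_pow_mul_h q f g a k

lemma Phi_one : Phi q f g 1 = Finsupp.single (0, 0) 1 := by
  rw [Phi_apply, map_one, Module.End.one_apply]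

lemma rho_Zel :
    rho q f g (Zel q f g a)
      = q • ((Xop * Yop q f g : Module.End F (MM F)) - aeval (Hop f) a) := by
  rw [Zel_def, map_smul, map_sub, map_mul, rho_x, rho_y, rho_aeval]

lemma Phi_Zel_pow_bound (m : ℕ) :
    ∀ j k : ℕ, m < j → Phi q f g (Zel q f g a ^ m) (j, k) = 0 := by
  induction m with
  | zero =>
    intro j k hj
    rw [pow_zero, Phi_one, Finsupp.single_apply, if_neg]
    intro hcc
    obtain ⟨h1', h2'⟩ : 0 = j ∧ 0 = k := by simpa [Prod.ext_iff] using hcc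
    omega
  | succ m ih =>
    intro j k hj
    rw [pow_succ', Phi_mul, rho_Zel]
    cases j with
    | zero => omega
    | succ j' =>
      rw [LinearMap.smul_apply, LinearMap.sub_apply, Module.End.mul_apply,
        Finsupp.smul_apply, Finsupp.sub_apply, Xop_apply_succ, aeval_Hop_apply]
      have hP : Phi q f g (Zel q f g a ^ m) (j' + 1, k) = 0 := ih (j' + 1) k (by omega)
      cases k with
      | zero =>
        rw [Yop_apply_zero, hP]
        simp
      | succ k' =>
        rw [Yop_apply_succ, hP, ih j' k' (by omega), mul_zero, zero_comp, smul_zero,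
          zero_add, mul_zero, sub_zero, smul_zero]

/-- The leading scalar of `Z^m`. -/
noncomputable def zeta (q : F) : ℕ → F
  | 0 => 1
  | m + 1 => q ^ (m + 1) * zeta q m

lemma zeta_ne_zero (hq0 : q ≠ 0) (m : ℕ) : zeta q m ≠ 0 := by
  induction m with
  | zero => exact one_ne_zero
  | succ m ih => exact mul_ne_zero (pow_ne_zero _ hq0) ih

lemma Phi_Zel_pow_top (m : ℕ) :
    Phi q f g (Zel q f g a ^ m) (m, m) = C (zeta q m) := by
  induction m with
  | zero =>
    rw [pow_zero, Phi_one, Finsupp.single_apply, if_pos rfl]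
    simp [zeta]
  | succ m ih =>
    rw [pow_succ', Phi_mul, rho_Zel, LinearMap.smul_apply, LinearMap.sub_apply,
      Module.End.mul_apply, Finsupp.smul_apply, Finsupp.sub_apply, Xop_apply_succ,
      aeval_Hop_apply, Yop_apply_succ, ih,
      Phi_Zel_pow_bound q f g a m (m + 1) (m + 1) (by omega), mul_zero, mul_zero,
      add_zero, sub_zero, C_comp, smul_C, smul_C, smul_eq_mul, smul_eq_mul]
    rw [show zeta q (m + 1) = q ^ (m + 1) * zeta q m from rfl, pow_succ']
    ring

/-! ### The descent argument -/

lemma descent (hf : 1 < f.degree) {l : ℕ} (hl : 0 < l) (hq : IsPrimitiveRoot q l)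
    (hg : g = a.comp f - q • a) :
    ∀ N : ℕ, ∀ c : QGHA F q f g, c ∈ Subalgebra.center F (QGHA F q f g) →
      (∀ mn ∈ (Phi q f g c).support, mn.1 < N) →
      c ∈ Algebra.adjoin F {Zel q f g a ^ l} := by
  intro N
  induction N with
  | zero =>
    intro c _ hsupp
    have h0 : Phi q f g c = 0 := by
      refine Finsupp.ext fun mn => ?_
      by_contra hne
      have := hsupp mn (Finsupp.mem_support_iff.mpr (by simpa using hne))
      omega
    have hzero : c = 0 := by rw [← Psi_Phi q f g c, h0, map_zero]
    rw [hzero]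
    exact zero_mem _
  | succ N ih =>
    intro c hc hsupp
    have hxc : QGHA.x q f g * c = c * QGHA.x q f g := Subalgebra.mem_center_iff.mp hc _
    have hhc : QGHA.h q f g * c = c * QGHA.h q f g := Subalgebra.mem_center_iff.mp hc _
    have hP1 : Phi q f g c (N + 1, N + 1) = 0 := by
      by_contra hne
      have := hsupp (N + 1, N + 1) (Finsupp.mem_support_iff.mpr hne)
      omega
    have hA := eqA q f g c hxc N
    rw [hP1, zero_mul, add_zero] at hA
    by_cases hp : Phi q f g c (N, N) = 0
    · apply ih c hc
      intro mn hmn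
      have hlt := hsupp mn hmn
      have hval := Finsupp.mem_support_iff.mp hmn
      rcases eq_or_ne mn.1 mn.2 with hd | hd
      · rcases eq_or_ne mn.1 N with hN | hN
        · exfalso
          apply hval
          have hmnN : mn = ((N : ℕ), (N : ℕ)) := by
            refine Prod.ext hN ?_
            omega
          rw [hmnN]
          exact hp
        · omega
      · exact absurd (diag q f g hf c hhc hd) hval
    · have hq0 : q ≠ 0 := hq.ne_zero hl.ne'
      have hdeg : (Phi q f g c (N, N)).natDegree = 0 := by
        by_contra h0
        have heq : (Phi q f g c (N, N)).natDegree
            = (Phi q f g c (N, N)).natDegree * f.natDegree := by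
          conv_lhs => rw [hA, smul_eq_C_mul]
          rw [natDegree_C_mul (pow_ne_zero N hq0), natDegree_comp]
        have h2 : (Phi q f g c (N, N)).natDegree * 2
            ≤ (Phi q f g c (N, N)).natDegree * f.natDegree :=
          Nat.mul_le_mul_left _ (natDegree_f_ge f hf)
        omega
      set α := (Phi q f g c (N, N)).coeff 0 with hα_def
      have hpc : Phi q f g c (N, N) = C α := eq_C_of_natDegree_eq_zero hdeg
      have hα : α ≠ 0 := fun h0 => hp (by rw [hpc, h0, map_zero])
      have hqN : q ^ N = 1 := by
        have h3 : (C α : F[X]) = C (q ^ N * α) := by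
          conv_lhs => rw [← hpc, hA, hpc, C_comp, smul_C, smul_eq_mul]
        have h4 : α = q ^ N * α := C_inj.mp h3
        exact mul_right_cancel₀ hα (by rw [one_mul, ← h4])
      have hdvd : l ∣ N := hq.dvd_of_pow_eq_one N hqN
      have hZN_adj : Zel q f g a ^ N ∈ Algebra.adjoin F {Zel q f g a ^ l} := by
        obtain ⟨t, rfl⟩ := hdvd
        rw [pow_mul]
        exact pow_mem (Algebra.self_mem_adjoin_singleton F _) t
      have hZN_cent : Zel q f g a ^ N ∈ Subalgebra.center F (QGHA F q f g) :=
        Zel_pow_central q f g a hg hqN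
      set β := α / zeta q N with hβ
      set c' := c - β • Zel q f g a ^ N with hc'def
      have hc'c : c' ∈ Subalgebra.center F (QGHA F q f g) :=
        sub_mem hc (SMulMemClass.smul_mem β hZN_cent)
      have hc'h : QGHA.h q f g * c' = c' * QGHA.h q f g :=
        Subalgebra.mem_center_iff.mp hc'c _
      have hPhi' : ∀ mn ∈ (Phi q f g c').support, mn.1 < N := by
        intro mn hmn
        have hval := Finsupp.mem_support_iff.mp hmn
        rcases eq_or_ne mn.1 mn.2 with hd | hd
        swap
        · exact absurd (diag q f g hf c' hc'h hd) hval
        · by_contra hge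
          apply hval
          have hPc' : Phi q f g c' mn
              = Phi q f g c mn - β • Phi q f g (Zel q f g a ^ N) mn := by
            rw [hc'def, map_sub, map_smul, Finsupp.sub_apply, Finsupp.smul_apply]
          rcases eq_or_ne mn.1 N with hN | hN
          · have hmnN : mn = ((N : ℕ), (N : ℕ)) := by
              refine Prod.ext hN ?_
              omega
            rw [hPc', hmnN, hpc, Phi_Zel_pow_top, hβ, smul_C, smul_eq_mul,
              div_mul_cancel₀ α (zeta_ne_zero q hq0 N), sub_self]
          · have hgt : N < mn.1 := by omega
            have hb1 : Phi q f g c mn = 0 := by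
              by_contra hne
              have := hsupp mn (Finsupp.mem_support_iff.mpr hne)
              omega
            rw [hPc', hb1, show mn = ((mn.1 : ℕ), (mn.2 : ℕ)) from rfl,
              Phi_Zel_pow_bound q f g a N mn.1 mn.2 hgt, smul_zero, sub_zero]
      have hc'adj := ih c' hc'c hPhi'
      have hsplit : c = c' + β • Zel q f g a ^ N := by
        rw [hc'def]
        abel
      rw [hsplit]
      exact add_mem hc'adj (SMulMemClass.smul_mem β hZN_adj)

end Identities

end QGHAProof

/-- Suppose `deg f > 1`, `q` is a primitive `ℓ`-th root of unity and
`g = σ(a) − q·a` for some `a ∈ F[h]`, where `σ` is the endomorphism of `F[h]` with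
`σ(h) = f` (so `σ(a) = a ∘ f`).  Set `Z = q(xy − a(h))`.  Then the center of `H_q(f,g)`
is the subalgebra `F[Z^ℓ]` generated by `Z^ℓ`. -/
theorem qgha_center_root_of_unity {F : Type*} [Field F] (q : F) (f g : F[X])
    (hf : 1 < f.degree) (ℓ : ℕ) (hℓ : 0 < ℓ) (hq : IsPrimitiveRoot q ℓ)
    (a : F[X]) (hg : g = a.comp f - q • a) :
    Subalgebra.center F (QGHA F q f g) =
      Algebra.adjoin F
        {(q • (QGHA.x q f g * QGHA.y q f g - aeval (QGHA.h q f g) a)) ^ ℓ} := by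
  have hZ : q • (QGHA.x q f g * QGHA.y q f g - aeval (QGHA.h q f g) a)
      = QGHAProof.Zel q f g a := rfl
  rw [hZ]
  apply le_antisymm
  · intro c hc
    refine QGHAProof.descent q f g a hf hℓ hq hg
      ((QGHAProof.Phi q f g c).support.sup (fun mn => mn.1) + 1) c hc ?_
    intro mn hmn
    have hle : mn.1 ≤ (QGHAProof.Phi q f g c).support.sup (fun mn => mn.1) :=
      Finset.le_sup (f := fun mn : ℕ × ℕ => mn.1) hmn
    omega
  · apply Algebra.adjoin_le
    rw [Set.singleton_subset_iff]
    exact QGHAProof.Zel_pow_central q f g a hg hq.pow_eq_one
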